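/- arXiv:1603.09013 — 2 statements merged into one kernel-verified Lean document; each statement's English description precedes it below -/
import Mathlib

section
/- The reduced word 𝐢^A = (1,2,…,n)(1,2,…,n−1)⋯(1,2)(1) for the reversal w₀ in S_{n+1} is i-semi-adapted for every i ∈ {1,…,n}. -/
open scoped Classical

noncomputable section

/-- Standard basis vector `e i` (1-based coordinates, ambient `ℤ^(n+1)` sits inside `ℕ → ℤ`). -/
def stdE (i : ℕ) : ℕ → ℤ := fun j => if j = i then 1 else 0

/-- Type `A_n` simple root `α_i = e_i - e_(i+1)`. -/
def alphaA (i : ℕ) : ℕ → ℤ := stdE i - stdE (i+1)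

/-- Positive root `α_(i,j) = α_i + ⋯ + α_j = e_i - e_(j+1)`. -/
def rootA (i j : ℕ) : ℕ → ℤ := stdE i - stdE (j+1)

/-- `β` is a positive root of type `A_n`. -/
def PosRootA (n : ℕ) (β : ℕ → ℤ) : Prop :=
  ∃ i j, 1 ≤ i ∧ i ≤ j ∧ j ≤ n ∧ β = rootA i j

/-- Simple transposition `s_i = (i, i+1)`. -/
def sA (i : ℕ) : Equiv.Perm ℕ := Equiv.swap i (i+1)

/-- Product `s_(i₁) ⋯ s_(i_N)` of the simple transpositions of a word. -/
def wordProdA (w : List ℕ) : Equiv.Perm ℕ := (w.map sA).prod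

/-- The reversal permutation `w₀ : k ↦ n+2-k` of `{1,…,n+1}`. -/
def w0A (n : ℕ) : Equiv.Perm ℕ :=
  Function.Involutive.toPerm (fun k => if 1 ≤ k ∧ k ≤ n+1 then n+2-k else k)
    (by intro k; dsimp only; split_ifs <;> omega)

/-- A permutation of coordinate indices acts on vectors by permuting coordinates. -/
def permAct (σ : Equiv.Perm ℕ) (v : ℕ → ℤ) : ℕ → ℤ := fun j => v (σ⁻¹ j)

/-- The induced root sequence `β_k = s_(i₁)⋯s_(i_(k-1)) (α_(i_k))` of a word (0-indexed). -/
def rootSeqA (w : List ℕ) : List (ℕ → ℤ) :=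
  (List.range w.length).map fun k => permAct (wordProdA (w.take k)) (alphaA (w.getD k 0))

/-- The word `𝐢^A = (1,2,…,n)(1,2,…,n-1)⋯(1,2)(1)`. -/
def wordA (n : ℕ) : List ℕ :=
  ((List.range n).reverse).flatMap fun m => (List.range (m+1)).map (· + 1)

/-- `w` is a reduced word for the longest element `w₀` of `S_(n+1)`. -/
def isReducedWordA (n : ℕ) (w : List ℕ) : Prop :=
  (∀ i ∈ w, 1 ≤ i ∧ i ≤ n) ∧ w.length = n * (n+1) / 2 ∧ wordProdA w = w0A n

/-- Standard inner product on `ℤ^(n+1)` (coordinates `1,…,n+1`; index `0` unused). -/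
def ipA (n : ℕ) (v u : ℕ → ℤ) : ℤ := ∑ j ∈ Finset.range (n+2), v j * u j

/-- A braid move: `two k` interchanges the letters at positions `k, k+1`;
`three k` replaces the letters `(a, b, a)` at positions `k, k+1, k+2` by `(b, a, b)`. -/
inductive BraidMove where
  | two (k : ℕ)
  | three (k : ℕ)

/-- The effect of a braid move on a word. -/
def moveWord (w : List ℕ) : BraidMove → List ℕ
  | .two k => (w.set k (w.getD (k+1) 0)).set (k+1) (w.getD k 0)
  | .three k => ((w.set k (w.getD (k+1) 0)).set (k+1) (w.getD k 0)).set (k+2) (w.getD (k+1) 0)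

/-- Validity of a braid move on a word, in type `A`: a 2-term move needs letters at distance
`≥ 2`, a 3-term move needs the pattern `(a, b, a)` with `|a - b| = 1`. -/
def moveOKA (w : List ℕ) : BraidMove → Prop
  | .two k => k + 1 < w.length ∧
      (w.getD k 0 + 2 ≤ w.getD (k+1) 0 ∨ w.getD (k+1) 0 + 2 ≤ w.getD k 0)
  | .three k => k + 2 < w.length ∧ w.getD (k+2) 0 = w.getD k 0 ∧
      (w.getD k 0 + 1 = w.getD (k+1) 0 ∨ w.getD (k+1) 0 + 1 = w.getD k 0)

/-- The semi-adaptedness condition for the letter `i`: any 3-term braid move must be applied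
where the three consecutive induced roots are `(β, β + α_i, α_i)`. -/
def semiCondA (i : ℕ) (w : List ℕ) : BraidMove → Prop
  | .two _ => True
  | .three k =>
      (rootSeqA w).getD (k+1) 0 = (rootSeqA w).getD k 0 + alphaA i ∧
      (rootSeqA w).getD (k+2) 0 = alphaA i

/-- Validity of a sequence of braid moves, each allowed by `i`-semi-adaptedness. -/
def validSeqA (i : ℕ) : List ℕ → List BraidMove → Prop
  | _, [] => True
  | w, m :: σ => moveOKA w m ∧ semiCondA i w m ∧ validSeqA i (moveWord w m) σ

/-- The word obtained by applying a sequence of braid moves. -/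
def applyMovesWord (w : List ℕ) (σ : List BraidMove) : List ℕ := σ.foldl moveWord w

/-- `w` is `i`-semi-adapted: some sequence of braid moves allowed by `i`-semi-adaptedness
takes `w` to a word whose first letter is `i`. -/
def SemiAdaptedA (i : ℕ) (w : List ℕ) : Prop :=
  ∃ σ : List BraidMove, validSeqA i w σ ∧ (applyMovesWord w σ).getD 0 0 = i

/-- The effect of a braid move on Lusztig data (tuples, recorded as lists of naturals):
a 2-term move keeps entries attached to their roots; a 3-term move applies Lusztig's
piecewise-linear map `(c₁,c₂,c₃) ↦ (max(c₂,c₁+c₂-c₃), min(c₁,c₃), max(c₂,c₂+c₃-c₁))`. -/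
def moveData (c : List ℕ) : BraidMove → List ℕ
  | .two k => (c.set k (c.getD (k+1) 0)).set (k+1) (c.getD k 0)
  | .three k =>
      ((c.set k (max (c.getD (k+1) 0) (c.getD k 0 + c.getD (k+1) 0 - c.getD (k+2) 0))).set
          (k+1) (min (c.getD k 0) (c.getD (k+2) 0))).set
          (k+2) (max (c.getD (k+1) 0) (c.getD (k+1) 0 + c.getD (k+2) 0 - c.getD k 0))

/-- The composite transition map `R_σ` on Lusztig data for a sequence `σ` of braid moves. -/
def Rdata (σ : List BraidMove) (c : List ℕ) : List ℕ := σ.foldl moveData c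

/-- The inverse `R_σ⁻¹`: since each single-move transition map is an involution, the inverse
of `R_σ` applies the single-move maps in the reverse order. -/
def RdataInv (σ : List BraidMove) (c : List ℕ) : List ℕ := σ.reverse.foldl moveData c

/-- One step of bracket cancellation, on labeled brackets (`true` = '(' , `false` = ')').
The state is `(labels of uncanceled ')', stack of currently open '(')`. -/
def brStep {α : Type*} (st : List α × List α) (x : Bool × α) : List α × List α :=
  match x with
  | (true, lab) => (st.1, lab :: st.2)
  | (false, lab) =>
    match st.2 with
    | [] => (lab :: st.1, [])
    | _ :: rest => (st.1, rest)

/-- Sequentially cancel adjacent `()` pairs in a labeled bracket string; returns the labels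
of the uncanceled ')'s (head = rightmost) and of the uncanceled '('s (head = rightmost). -/
def brReduce {α : Type*} (l : List (Bool × α)) : List α × List α := l.foldl brStep ([], [])

/-- The label of the leftmost uncanceled '(' in a labeled bracket string, if any. -/
def brLeftOpen {α : Type*} (l : List (Bool × α)) : Option α := (brReduce l).2.getLast?

/-- The label of the rightmost uncanceled ')' in a labeled bracket string, if any. -/
def brRightClose {α : Type*} (l : List (Bool × α)) : Option α := (brReduce l).1.head?

/-- The roots `η₁, …, η_k`: those prior to `α_i` in the induced order of `w` with
`(α_i | η) < 0`, in order (as a 0-indexed list). -/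
def etaListA (n i : ℕ) (w : List ℕ) : List (ℕ → ℤ) :=
  ((rootSeqA w).takeWhile fun β => decide (β ≠ alphaA i)).filter
    fun η => decide (ipA n (alphaA i) η < 0)

/-- The bracket string `S_i^𝐢(𝐜)`: for each `j`, `c_(ν_(j+1))` ')'s labeled `j` followed by
`c_(η_(j+1))` '('s labeled `j`, and finally `c_(α_i)` ')'s labeled `k`. Here `ν = η + α_i`. -/
def brStringA (n i : ℕ) (w : List ℕ) (c : (ℕ → ℤ) → ℕ) : List (Bool × ℕ) :=
  ((List.range (etaListA n i w).length).flatMap fun j =>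
    List.replicate (c ((etaListA n i w).getD j 0 + alphaA i)) (false, j) ++
    List.replicate (c ((etaListA n i w).getD j 0)) (true, j)) ++
  List.replicate (c (alphaA i)) (false, (etaListA n i w).length)

/-- Lusztig data of a Kostant partition `𝐜` with respect to the word `w`: the values of `𝐜`
read along the induced root order of `w`. -/
def lusDataA (w : List ℕ) (c : (ℕ → ℤ) → ℕ) : List ℕ := (rootSeqA w).map c

/-- Add `1` to the entry in position 1 of a Lusztig datum. -/
def inc1 (c : List ℕ) : List ℕ := c.set 0 (c.getD 0 0 + 1)

/-- Subtract `1` from the entry in position 1 of a Lusztig datum. -/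
def dec1 (c : List ℕ) : List ℕ := c.set 0 (c.getD 0 0 - 1)


section Aux

lemma permAct_mul' (σ τ : Equiv.Perm ℕ) (v : ℕ → ℤ) :
    permAct (σ * τ) v = permAct σ (permAct τ v) := by
  funext j; simp [permAct, mul_inv_rev, Equiv.Perm.mul_apply]

lemma permAct_stdE (σ : Equiv.Perm ℕ) (j : ℕ) : permAct σ (stdE j) = stdE (σ j) := by
  funext m
  simp only [permAct, stdE]
  simp [Equiv.Perm.inv_eq_iff_eq, Equiv.symm_apply_eq]

lemma permAct_sub (σ : Equiv.Perm ℕ) (v u : ℕ → ℤ) :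
    permAct σ (v - u) = permAct σ v - permAct σ u := rfl

lemma permAct_add (σ : Equiv.Perm ℕ) (v u : ℕ → ℤ) :
    permAct σ (v + u) = permAct σ v + permAct σ u := rfl

lemma permAct_alphaA (σ : Equiv.Perm ℕ) (a : ℕ) :
    permAct σ (alphaA a) = stdE (σ a) - stdE (σ (a+1)) := by
  rw [alphaA, permAct_sub, permAct_stdE, permAct_stdE]

/-- The block `(1, 2, …, L)`. -/
def blockA (L : ℕ) : List ℕ := (List.range L).map (· + 1)

lemma blockA_length (L : ℕ) : (blockA L).length = L := by simp [blockA]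

lemma blockA_succ (L : ℕ) : blockA (L+1) = blockA L ++ [L+1] := by
  simp [blockA, List.range_succ]

lemma blockA_getD {k L : ℕ} (h : k < L) : (blockA L).getD k 0 = k + 1 := by
  rw [List.getD_eq_getElem _ _ (by simpa [blockA_length] using h)]
  simp [blockA]

lemma blockA_take {m L : ℕ} (h : m ≤ L) : (blockA L).take m = blockA m := by
  simp [blockA, ← List.map_take, List.take_range, inf_eq_left.2 h]

lemma wordProdA_append (a b : List ℕ) : wordProdA (a ++ b) = wordProdA a * wordProdA b := by
  simp [wordProdA]

lemma wordA_succ (N : ℕ) : wordA (N+1) = blockA (N+1) ++ wordA N := by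
  rw [wordA, wordA, List.range_succ, List.reverse_append]
  simp [blockA]

lemma sigmaA_apply (q : ℕ) : ∀ j, 1 ≤ j →
    wordProdA (blockA q) j = if j ≤ q then j + 1 else if j = q + 1 then 1 else j := by
  induction q with
  | zero =>
    intro j hj
    simp only [blockA, List.range_zero, List.map_nil, wordProdA, List.prod_nil,
      Equiv.Perm.one_apply]
    split_ifs <;> omega
  | succ q ih =>
    intro j hj
    have h : wordProdA (blockA (q+1)) = wordProdA (blockA q) * sA (q+1) := by
      rw [blockA_succ, wordProdA_append]; rfl
    rw [h, Equiv.Perm.mul_apply, sA]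
    rcases eq_or_ne j (q+1) with rfl | h1
    · rw [Equiv.swap_apply_left, ih (q+2) (by omega)]
      split_ifs <;> omega
    rcases eq_or_ne j (q+2) with rfl | h2
    · rw [Equiv.swap_apply_right, ih (q+1) (by omega)]
      split_ifs <;> omega
    · rw [Equiv.swap_apply_of_ne_of_ne h1 h2, ih j hj]
      split_ifs <;> omega

lemma rootSeqA_getD (w : List ℕ) (k : ℕ) (hk : k < w.length) :
    (rootSeqA w).getD k 0 = permAct (wordProdA (w.take k)) (alphaA (w.getD k 0)) := by
  rw [rootSeqA, List.getD_eq_getElem _ _ (by simpa using hk)]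
  simp

lemma getD_append_add (p w : List ℕ) (k : ℕ) :
    (p ++ w).getD (p.length + k) 0 = w.getD k 0 := by
  rw [List.getD_append_right _ _ _ _ (by omega), Nat.add_sub_cancel_left]

lemma set_append_add (p w : List ℕ) (k a : ℕ) :
    (p ++ w).set (p.length + k) a = p ++ w.set k a := by
  rw [List.set_append]
  simp [Nat.add_sub_cancel_left]

lemma getD_at {l : List ℕ} {k : ℕ} (h : l.length = k) (x : ℕ) (s : List ℕ) :
    (l ++ x :: s).getD k 0 = x := by
  subst h
  rw [List.getD_append_right _ _ _ _ le_rfl]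
  simp

lemma getD_at1 {l : List ℕ} {k : ℕ} (h : l.length = k) (x y : ℕ) (s : List ℕ) :
    (l ++ x :: y :: s).getD (k + 1) 0 = y := by
  subst h
  rw [show l.length + 1 = l.length + 1 from rfl, getD_append_add]
  rfl

lemma getD_at2 {l : List ℕ} {k : ℕ} (h : l.length = k) (x y z : ℕ) (s : List ℕ) :
    (l ++ x :: y :: z :: s).getD (k + 2) 0 = z := by
  subst h
  rw [show l.length + 2 = l.length + 2 from rfl, getD_append_add]
  rfl

lemma set_at {l : List ℕ} {k : ℕ} (h : l.length = k) (x a : ℕ) (s : List ℕ) :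
    (l ++ x :: s).set k a = l ++ a :: s := by
  subst h
  rw [List.set_append]
  simp

lemma set_at1 {l : List ℕ} {k : ℕ} (h : l.length = k) (x y a : ℕ) (s : List ℕ) :
    (l ++ x :: y :: s).set (k + 1) a = l ++ x :: a :: s := by
  subst h
  rw [show l.length + 1 = l.length + 1 from rfl, set_append_add]
  rfl

lemma set_at2 {l : List ℕ} {k : ℕ} (h : l.length = k) (x y z a : ℕ) (s : List ℕ) :
    (l ++ x :: y :: z :: s).set (k + 2) a = l ++ x :: y :: a :: s := by
  subst h
  rw [show l.length + 2 = l.length + 2 from rfl, set_append_add]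
  rfl

lemma move_two_explicit {l : List ℕ} {k : ℕ} (h : l.length = k) (b a : ℕ) (s : List ℕ) :
    moveWord (l ++ b :: a :: s) (.two k) = l ++ a :: b :: s := by
  show ((l ++ b :: a :: s).set k ((l ++ b :: a :: s).getD (k+1) 0)).set (k+1)
      ((l ++ b :: a :: s).getD k 0) = l ++ a :: b :: s
  rw [getD_at h, getD_at1 h, set_at h, set_at1 h]

lemma move_three_explicit {l : List ℕ} {k : ℕ} (h : l.length = k) (a b : ℕ) (s : List ℕ) :
    moveWord (l ++ a :: b :: a :: s) (.three k) = l ++ b :: a :: b :: s := by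
  show (((l ++ a :: b :: a :: s).set k ((l ++ a :: b :: a :: s).getD (k+1) 0)).set (k+1)
      ((l ++ a :: b :: a :: s).getD k 0)).set (k+2) ((l ++ a :: b :: a :: s).getD (k+1) 0)
      = l ++ b :: a :: b :: s
  rw [getD_at h, getD_at1 h, set_at h, set_at1 h, set_at2 h]

lemma applyMovesWord_cons (w : List ℕ) (m : BraidMove) (σ : List BraidMove) :
    applyMovesWord w (m :: σ) = applyMovesWord (moveWord w m) σ := rfl

lemma applyMovesWord_append (w : List ℕ) (σ τ : List BraidMove) :
    applyMovesWord w (σ ++ τ) = applyMovesWord (applyMovesWord w σ) τ :=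
  List.foldl_append

lemma validSeqA_cons (i : ℕ) (w : List ℕ) (m : BraidMove) (σ : List BraidMove) :
    validSeqA i w (m :: σ) ↔
      moveOKA w m ∧ semiCondA i w m ∧ validSeqA i (moveWord w m) σ := Iff.rfl

lemma validSeqA_append (i : ℕ) : ∀ (σ τ : List BraidMove) (w : List ℕ),
    validSeqA i w σ → validSeqA i (applyMovesWord w σ) τ → validSeqA i w (σ ++ τ) := by
  intro σ
  induction σ with
  | nil => intro τ w _ h; exact h
  | cons m σ ih =>
    intro τ w hσ hτ
    obtain ⟨h1, h2, h3⟩ := hσ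
    exact ⟨h1, h2, ih τ (moveWord w m) h3 hτ⟩

/-- Shift the position of a braid move by `L`. -/
def shiftMove (L : ℕ) : BraidMove → BraidMove
  | .two k => .two (L + k)
  | .three k => .three (L + k)

lemma moveWord_shift (p w : List ℕ) (m : BraidMove) :
    moveWord (p ++ w) (shiftMove p.length m) = p ++ moveWord w m := by
  cases m with
  | two k =>
    show ((p ++ w).set (p.length + k) ((p ++ w).getD (p.length + k + 1) 0)).set
        (p.length + k + 1) ((p ++ w).getD (p.length + k) 0) = _
    rw [show p.length + k + 1 = p.length + (k+1) from rfl]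
    rw [getD_append_add, getD_append_add, set_append_add]
    rw [show (p ++ w.set k (w.getD (k+1) 0)) = p ++ w.set k (w.getD (k+1) 0) from rfl]
    rw [set_append_add]
    rfl
  | three k =>
    show (((p ++ w).set (p.length + k) ((p ++ w).getD (p.length + k + 1) 0)).set
        (p.length + k + 1) ((p ++ w).getD (p.length + k) 0)).set
        (p.length + k + 2) ((p ++ w).getD (p.length + k + 1) 0) = _
    rw [show p.length + k + 1 = p.length + (k+1) from rfl,
        show p.length + k + 2 = p.length + (k+2) from rfl]
    rw [getD_append_add, getD_append_add, set_append_add, set_append_add, set_append_add]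
    rfl

lemma rootSeq_append_getD (p w : List ℕ) (k : ℕ) (hk : k < w.length) :
    (rootSeqA (p ++ w)).getD (p.length + k) 0
      = permAct (wordProdA p) ((rootSeqA w).getD k 0) := by
  rw [rootSeqA_getD _ _ (by simp [List.length_append]; omega), rootSeqA_getD _ _ hk]
  rw [List.take_append, List.take_of_length_le (by omega),
      Nat.add_sub_cancel_left, wordProdA_append, permAct_mul', getD_append_add]

lemma lift_valid (p : List ℕ) (i : ℕ) (h1 : 2 ≤ i)
    (hW1 : wordProdA p (i-1) = i) (hW2 : wordProdA p i = i + 1) :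
    ∀ (σ : List BraidMove) (v : List ℕ), validSeqA (i-1) v σ →
      validSeqA i (p ++ v) (σ.map (shiftMove p.length)) ∧
      applyMovesWord (p ++ v) (σ.map (shiftMove p.length)) = p ++ applyMovesWord v σ := by
  have hact : permAct (wordProdA p) (alphaA (i-1)) = alphaA i := by
    rw [permAct_alphaA, show i - 1 + 1 = i by omega, hW1, hW2, alphaA]
  intro σ
  induction σ with
  | nil => intro v _; exact ⟨trivial, rfl⟩
  | cons m σ ih =>
    intro v hv
    obtain ⟨hok, hsc, hrest⟩ := hv
    have hmw : moveWord (p ++ v) (shiftMove p.length m) = p ++ moveWord v m :=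
      moveWord_shift p v m
    have ihr := ih (moveWord v m) hrest
    refine ⟨⟨?_, ?_, by rw [hmw]; exact ihr.1⟩, ?_⟩
    · -- moveOKA
      cases m with
      | two k =>
        obtain ⟨hlen, hcond⟩ := hok
        refine ⟨by simp [List.length_append]; omega, ?_⟩
        rw [show p.length + k + 1 = p.length + (k+1) from rfl,
            getD_append_add, getD_append_add]
        exact hcond
      | three k =>
        obtain ⟨hlen, hcond⟩ := hok
        refine ⟨by simp [List.length_append]; omega, ?_⟩
        rw [show p.length + k + 1 = p.length + (k+1) from rfl,
            show p.length + k + 2 = p.length + (k+2) from rfl,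
            getD_append_add, getD_append_add, getD_append_add]
        exact hcond
    · -- semiCondA
      cases m with
      | two k => trivial
      | three k =>
        obtain ⟨hlen, _⟩ := hok
        obtain ⟨he1, he2⟩ := hsc
        constructor
        · show (rootSeqA (p ++ v)).getD (p.length + k + 1) 0
            = (rootSeqA (p ++ v)).getD (p.length + k) 0 + alphaA i
          rw [show p.length + k + 1 = p.length + (k+1) from rfl,
              rootSeq_append_getD _ _ _ (by omega), rootSeq_append_getD _ _ _ (by omega),
              he1, permAct_add, hact]
        · show (rootSeqA (p ++ v)).getD (p.length + k + 2) 0 = alphaA i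
          rw [show p.length + k + 2 = p.length + (k+2) from rfl,
              rootSeq_append_getD _ _ _ (by omega), he2, hact]
    · rw [List.map_cons, applyMovesWord_cons, hmw]; exact ihr.2

/-- The 2-term moves `[two (r+d-1), …, two (r+1), two r]`. -/
def twosFrom (r : ℕ) : ℕ → List BraidMove
  | 0 => []
  | d+1 => .two (r + d) :: twosFrom r d

lemma slide (i a r : ℕ) : ∀ (d : ℕ) (s : List ℕ),
    (∀ m, r < m → m ≤ r + d → a + 2 ≤ m ∨ m + 2 ≤ a) →
    validSeqA i (blockA (r + d) ++ a :: s) (twosFrom r d) ∧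
    ∃ s', applyMovesWord (blockA (r + d) ++ a :: s) (twosFrom r d) = blockA r ++ a :: s' := by
  intro d
  induction d with
  | zero => intro s _; exact ⟨trivial, s, rfl⟩
  | succ d ih =>
    intro s hcond
    have hrw : blockA (r + (d+1)) ++ a :: s = blockA (r + d) ++ (r + d + 1) :: a :: s := by
      rw [show r + (d+1) = (r+d)+1 from rfl, blockA_succ, List.append_assoc]
      rfl
    have hlen : (blockA (r+d)).length = r + d := blockA_length _
    have hmw : moveWord (blockA (r + (d+1)) ++ a :: s) (.two (r+d))
        = blockA (r + d) ++ a :: (r + d + 1) :: s := by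
      rw [hrw, move_two_explicit hlen]
    have ihs := ih ((r + d + 1) :: s) (fun m hm1 hm2 => hcond m hm1 (by omega))
    refine ⟨⟨?_, trivial, ?_⟩, ?_⟩
    · -- moveOKA for two (r+d)
      constructor
      · rw [hrw]
        simp only [List.length_append, hlen, List.length_cons]
        omega
      · rw [hrw, getD_at hlen, getD_at1 hlen]
        rcases hcond (r+d+1) (by omega) (by omega) with h | h
        · right; omega
        · left; omega
    · rw [hmw]; exact ihs.1
    · obtain ⟨s', hs'⟩ := ihs.2
      exact ⟨s', by rw [show twosFrom r (d+1) = .two (r+d) :: twosFrom r d from rfl,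
        applyMovesWord_cons, hmw, hs']⟩

end Aux


lemma main_auxA : ∀ n i : ℕ, 1 ≤ i → i ≤ n → SemiAdaptedA i (wordA n) := by
  intro n
  induction n with
  | zero => intro i h1 h2; omega
  | succ N ih =>
    intro i hi1 hi2
    rcases eq_or_lt_of_le hi1 with h1 | h1
    · -- i = 1 : the word already starts with 1
      refine ⟨[], trivial, ?_⟩
      show (wordA (N+1)).getD 0 0 = i
      rw [wordA_succ, List.getD_append _ _ _ _ (by simp [blockA_length]),
        blockA_getD (by omega)]
      omega
    · -- 2 ≤ i
      obtain ⟨j, rfl⟩ : ∃ j, i = j + 2 := ⟨i - 2, by omega⟩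
      obtain ⟨σs, hσv, hσh⟩ := ih (j+1) (by omega) (by omega)
      set p := blockA (N+1) with hp
      have hplen : p.length = N + 1 := blockA_length _
      have hW1 : wordProdA p (j + 2 - 1) = j + 2 := by
        rw [hp, show j + 2 - 1 = j + 1 from rfl, sigmaA_apply _ _ (by omega),
          if_pos (by omega)]
      have hW2 : wordProdA p (j + 2) = j + 2 + 1 := by
        rw [hp, sigmaA_apply _ _ (by omega), if_pos (by omega)]
      have hσv' : validSeqA (j + 2 - 1) (wordA N) σs := hσv
      obtain ⟨hlv, hla⟩ := lift_valid p (j+2) (by omega) hW1 hW2 σs (wordA N) hσv'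
      set w'' := applyMovesWord (wordA N) σs with hw''
      obtain ⟨t, ht⟩ : ∃ t, w'' = (j+1) :: t := by
        have hne : w'' ≠ [] := by intro h; rw [h] at hσh; simp [List.getD] at hσh
        obtain ⟨a, t, hat⟩ := List.exists_cons_of_ne_nil hne
        have ha : a = j + 1 := by rw [hat] at hσh; simpa using hσh
        exact ⟨t, by rw [hat, ha]⟩
      -- Stage A : slide the letter j+1 from position N+1 to position j+2
      have hcondA : ∀ m, j + 2 < m → m ≤ (j+2) + (N + 1 - (j+2)) →
          (j+1) + 2 ≤ m ∨ m + 2 ≤ j+1 := fun m hm1 _ => Or.inl (by omega)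
      have hslA := slide (j+2) (j+1) (j+2) (N + 1 - (j+2)) t hcondA
      rw [show (j+2) + (N + 1 - (j+2)) = N + 1 by omega] at hslA
      obtain ⟨hvalA, s₁, hs₁⟩ := hslA
      -- Stage B : 3-term move at position j
      set wB := blockA (j+2) ++ (j+1) :: s₁ with hwB
      have hb2 : blockA (j+2) = blockA j ++ [j+1, j+2] := by
        rw [show j + 2 = (j+1)+1 from rfl, blockA_succ, blockA_succ, List.append_assoc]
        rfl
      have hwB' : wB = blockA j ++ (j+1) :: (j+2) :: (j+1) :: s₁ := by
        rw [hwB, hb2, List.append_assoc]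
        rfl
      have hjlen : (blockA j).length = j := blockA_length _
      have hlenB : wB.length = j + 3 + s₁.length := by
        rw [hwB']
        simp [List.length_append, hjlen]
        omega
      have hg0 : wB.getD j 0 = j + 1 := by rw [hwB']; exact getD_at hjlen _ _
      have hg1 : wB.getD (j+1) 0 = j + 2 := by rw [hwB']; exact getD_at1 hjlen _ _ _
      have hg2 : wB.getD (j+2) 0 = j + 1 := by rw [hwB']; exact getD_at2 hjlen _ _ _ _
      have htake : ∀ m, m ≤ j + 2 → wB.take m = blockA m := by
        intro m hm
        rw [hwB, List.take_append, blockA_take hm, blockA_length,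
          show m - (j+2) = 0 by omega, List.take_zero, List.append_nil]
      -- values of the permutations
      have hv1 : wordProdA (blockA j) (j+1) = 1 := by
        rw [sigmaA_apply _ _ (by omega), if_neg (by omega), if_pos rfl]
      have hv2 : wordProdA (blockA j) (j+2) = j+2 := by
        rw [sigmaA_apply _ _ (by omega), if_neg (by omega), if_neg (by omega)]
      have hv3 : wordProdA (blockA (j+1)) (j+2) = 1 := by
        rw [sigmaA_apply _ _ (by omega), if_neg (by omega), if_pos rfl]
      have hv4 : wordProdA (blockA (j+1)) (j+3) = j+3 := by
        rw [sigmaA_apply _ _ (by omega), if_neg (by omega), if_neg (by omega)]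
      have hv5 : wordProdA (blockA (j+2)) (j+1) = j+2 := by
        rw [sigmaA_apply _ _ (by omega), if_pos (by omega)]
      have hv6 : wordProdA (blockA (j+2)) (j+2) = j+3 := by
        rw [sigmaA_apply _ _ (by omega), if_pos (by omega)]
      -- the three induced roots
      have hβ0 : (rootSeqA wB).getD j 0 = stdE 1 - stdE (j+2) := by
        rw [rootSeqA_getD _ _ (by omega), htake j (by omega), hg0, permAct_alphaA,
          hv1, hv2]
      have hβ1 : (rootSeqA wB).getD (j+1) 0 = stdE 1 - stdE (j+3) := by
        rw [rootSeqA_getD _ _ (by omega), htake (j+1) (by omega), hg1, permAct_alphaA,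
          hv3, hv4]
      have hβ2 : (rootSeqA wB).getD (j+2) 0 = stdE (j+2) - stdE (j+3) := by
        rw [rootSeqA_getD _ _ (by omega), htake (j+2) (by omega), hg2, permAct_alphaA,
          hv5, hv6]
      have hokB : moveOKA wB (.three j) := by
        refine ⟨by omega, by rw [hg0, hg2], Or.inl (by rw [hg0, hg1])⟩
      have hscB : semiCondA (j+2) wB (.three j) := by
        constructor
        · rw [hβ1, hβ0, show alphaA (j+2) = stdE (j+2) - stdE (j+3) from rfl]
          exact (sub_add_sub_cancel _ _ _).symm
        · rw [hβ2]; rfl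
      have hmwB : moveWord wB (.three j) = blockA j ++ (j+2) :: (j+1) :: (j+2) :: s₁ := by
        rw [hwB']; exact move_three_explicit hjlen _ _ _
      -- Stage C : slide the letter j+2 from position j to position 0
      have hcondC : ∀ m, 0 < m → m ≤ 0 + j → (j+2) + 2 ≤ m ∨ m + 2 ≤ j+2 :=
        fun m _ hm2 => Or.inr (by omega)
      have hslC := slide (j+2) (j+2) 0 j ((j+1) :: (j+2) :: s₁) hcondC
      rw [Nat.zero_add] at hslC
      obtain ⟨hvalC, s₃, hs₃⟩ := hslC
      -- assemble
      refine ⟨(σs.map (shiftMove p.length)) ++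
        (twosFrom (j+2) (N + 1 - (j+2)) ++ (BraidMove.three j :: twosFrom 0 j)), ?_, ?_⟩
      · rw [wordA_succ]
        refine validSeqA_append _ _ _ _ hlv ?_
        rw [hla, ht, hp]
        refine validSeqA_append _ _ _ _ hvalA ?_
        rw [hs₁]
        exact ⟨hokB, hscB, by rw [hmwB]; exact hvalC⟩
      · rw [wordA_succ, applyMovesWord_append, hla, ht, hp, applyMovesWord_append,
          hs₁, applyMovesWord_cons, hmwB, hs₃]
        simp [blockA]

/-- The reduced word `𝐢^A = (1,2,…,n)(1,2,…,n-1)⋯(1,2)(1)` for the reversal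
`w₀` in `S_(n+1)` is `i`-semi-adapted for every `i ∈ {1,…,n}`. -/
theorem statement10 (n : ℕ) (hn : 1 ≤ n) (i : ℕ) (hi1 : 1 ≤ i) (hi2 : i ≤ n) :
    SemiAdaptedA i (wordA n) :=
  main_auxA n i hi1 hi2

end
end

section
/- Let 𝐢^D = (i_1,…,i_N), N = n(n−1), be the concatenation of the blocks (i, i+1, …, n−1, n, n−2, n−3, …, i) for i = 1, …, n−2 followed by (n−1, n). Then the vectors β_k = s_{i_1}⋯s_{i_{k−1}}(α_{i_k}), 1 ≤ k ≤ N, are pairwise distinct positive roots of type D_n (hence list all of them), and the product s_{i_1}⋯s_{i_N} maps every positive root of type D_n to the negative of a positive root. In particular, 𝐢^D is a reduced word for the longest element of the Weyl group W(D_n). -/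
open scoped Classical

noncomputable section

/-- Type `D_n` simple roots: `α_i = e_i - e_(i+1)` for `1 ≤ i ≤ n-1`, `α_n = e_(n-1) + e_n`. -/
def alphaD (n i : ℕ) : ℕ → ℤ := if i = n then stdE (n-1) + stdE n else stdE i - stdE (i+1)

/-- Positive root `β_(i,k) = α_i + ⋯ + α_k = e_i - e_(k+1)` (for `1 ≤ i ≤ k ≤ n-1`). -/
def betaD (i k : ℕ) : ℕ → ℤ := stdE i - stdE (k+1)

/-- Positive root `γ_(i,k) = α_i + ⋯ + α_(n-2) + α_n + α_(n-1) + ⋯ + α_k = e_i + e_k`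
(for `1 ≤ i < k ≤ n`). -/
def gammaD (i k : ℕ) : ℕ → ℤ := stdE i + stdE k

/-- `β` is a positive root of type `D_n`. -/
def PosRootD (n : ℕ) (β : ℕ → ℤ) : Prop :=
  (∃ i k, 1 ≤ i ∧ i ≤ k ∧ k ≤ n-1 ∧ β = betaD i k) ∨
  (∃ i k, 1 ≤ i ∧ i < k ∧ k ≤ n ∧ β = gammaD i k)

/-- The simple reflection `s_i` of `W(D_n)` acting on `ℤ^n`: for `i ≤ n-1` it swaps
coordinates `i` and `i+1`; `s_n` swaps coordinates `n-1` and `n` and negates both. -/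
def sDap (n i : ℕ) (v : ℕ → ℤ) : ℕ → ℤ :=
  if i = n then fun j => if j = n-1 then -(v n) else if j = n then -(v (n-1)) else v j
  else fun j => if j = i then v (i+1) else if j = i+1 then v i else v j

/-- The action of the product `s_(i₁) ⋯ s_(i_N)` on a vector. -/
def actD (n : ℕ) (w : List ℕ) (v : ℕ → ℤ) : ℕ → ℤ := w.foldr (sDap n) v

/-- The induced root sequence `β_k = s_(i₁)⋯s_(i_(k-1)) (α_(i_k))` of a word (0-indexed). -/
def rootSeqD (n : ℕ) (w : List ℕ) : List (ℕ → ℤ) :=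
  (List.range w.length).map fun k => actD n (w.take k) (alphaD n (w.getD k 0))

/-- The block `(i, i+1, …, n-1, n, n-2, n-3, …, i)` of the word `𝐢^D`. -/
def blockD (n i : ℕ) : List ℕ :=
  ((List.range (n-i)).map (· + i)) ++ [n] ++ (((List.range (n-1-i)).map (· + i)).reverse)

/-- The word `𝐢^D`: the blocks `(i, i+1, …, n-1, n, n-2, …, i)` for `i = 1, …, n-2`,
followed by `(n-1, n)`. -/
def wordD (n : ℕ) : List ℕ :=
  ((List.range (n-2)).flatMap fun i' => blockD n (i'+1)) ++ [n-1, n]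

/-- Standard inner product on `ℤ^n` (coordinates `1,…,n`; index `0` unused). -/
def ipD (n : ℕ) (v u : ℕ → ℤ) : ℤ := ∑ j ∈ Finset.range (n+1), v j * u j

-- aux
def ascL (a b : ℕ) : List ℕ := (List.range (b - a)).map (· + a)

lemma blockD_eq (n i : ℕ) : blockD n i = ascL i n ++ ([n] ++ (ascL i (n-1)).reverse) := by
  simp [blockD, ascL]

lemma actD_nil (n v) : actD n [] v = v := rfl
lemma actD_cons (n a w v) : actD n (a :: w) v = sDap n a (actD n w v) := rfl
lemma actD_append (n u w v) : actD n (u ++ w) v = actD n u (actD n w v) := List.foldr_append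

lemma ascL_cons {a b : ℕ} (h : a < b) : ascL a b = a :: ascL (a+1) b := by
  unfold ascL
  rw [show b - a = (b - (a+1)) + 1 by omega, List.range_succ_eq_map]
  simp [List.map_map, Function.comp]
  intro x _; omega

lemma ascL_snoc {a b : ℕ} (h : a < b) : ascL a b = ascL a (b-1) ++ [b-1] := by
  unfold ascL
  rw [show b - a = (b - 1 - a) + 1 by omega, List.range_succ]
  simp
  omega

lemma rootSeq_append (n : ℕ) (u w : List ℕ) :
    rootSeqD n (u ++ w) = rootSeqD n u ++ (rootSeqD n w).map (actD n u) := by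
  unfold rootSeqD
  rw [List.length_append, List.range_add, List.map_append, List.map_map, List.map_map]
  congr 1
  · apply List.map_congr_left
    intro k hk
    simp only [List.mem_range] at hk
    rw [List.take_append_of_le_length (by omega), List.getD_eq_getElem?_getD,
      List.getD_eq_getElem?_getD, List.getElem?_append_left (by omega)]
  · apply List.map_congr_left
    intro k hk
    simp only [List.mem_range] at hk
    simp only [Function.comp]
    rw [List.take_append, List.getD_eq_getElem?_getD, List.getD_eq_getElem?_getD,
      List.getElem?_append_right (by omega), actD_append,
      show u.length + k - u.length = k from by omega,
      List.take_of_length_le (by omega : u.length ≤ u.length + k)]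

lemma rootSeq_cons (n : ℕ) (a : ℕ) (w : List ℕ) :
    rootSeqD n (a :: w) = alphaD n a :: (rootSeqD n w).map (sDap n a) := by
  have := rootSeq_append n [a] w
  simp only [List.singleton_append] at this
  rw [this]
  rfl

lemma sDap_top (n : ℕ) (v : ℕ → ℤ) (j : ℕ) :
    sDap n n v j = if j = n-1 then -(v n) else if j = n then -(v (n-1)) else v j := by
  simp [sDap]

lemma sDap_swap {n i : ℕ} (h : i ≠ n) (v : ℕ → ℤ) (j : ℕ) :
    sDap n i v j = if j = i then v (i+1) else if j = i+1 then v i else v j := by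
  simp [sDap, h]

lemma act_ascL (n : ℕ) : ∀ (d a b : ℕ), b - a = d → a ≤ b → b ≤ n → ∀ v j,
    actD n (ascL a b) v j = if j = a then v b else if a < j ∧ j ≤ b then v (j-1) else v j := by
  intro d
  induction d with
  | zero =>
    intro a b hd hab _ v j
    have hab2 : a = b := by omega
    subst hab2
    have he : ascL a a = [] := by simp [ascL]
    rw [he, actD_nil]
    split_ifs with h1 h2
    · rw [h1]
    · omega
    · rfl
  | succ d ih =>
    intro a b hd hab hbn v j
    have hab' : a < b := by omega
    have han : a ≠ n := by omega
    rw [ascL_cons hab', actD_cons, sDap_swap han]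
    simp only [ih (a+1) b (by omega) (by omega) hbn v]
    split_ifs <;> first | rfl | omega | (exfalso; omega) | (congr 1; omega)

lemma act_ascL_rev (n : ℕ) : ∀ (d a b : ℕ), b - a = d → a ≤ b → b ≤ n → ∀ v j,
    actD n ((ascL a b).reverse) v j = if j = b then v a else if a ≤ j ∧ j < b then v (j+1) else v j := by
  intro d
  induction d with
  | zero =>
    intro a b hd hab _ v j
    have hab2 : a = b := by omega
    subst hab2
    have he : ascL a a = [] := by simp [ascL]
    rw [he]
    simp only [List.reverse_nil, actD_nil]
    split_ifs with h1 h2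
    · rw [h1]
    · omega
    · rfl
  | succ d ih =>
    intro a b hd hab hbn v j
    have hab' : a < b := by omega
    have hbn' : b - 1 ≠ n := by omega
    rw [ascL_snoc hab', List.reverse_append, List.reverse_singleton, List.singleton_append,
      actD_cons, sDap_swap hbn']
    simp only [ih a (b-1) (by omega) (by omega) (by omega) v]
    have hb1 : b - 1 + 1 = b := by omega
    rw [hb1]
    split_ifs <;> first | rfl | omega | (exfalso; omega) | (congr 1; omega)

lemma act_block (n i : ℕ) (hn : 4 ≤ n) (h1 : 1 ≤ i) (h2 : i ≤ n-2) (v : ℕ → ℤ) (j : ℕ) :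
    actD n (blockD n i) v j = if j = i ∨ j = n then -v j else v j := by
  rw [blockD_eq, actD_append, actD_append]
  rw [show actD n [n] = sDap n n from rfl]
  simp only [act_ascL n (n-i) i n rfl (by omega) (by omega), sDap_top,
    act_ascL_rev n (n-1-i) i (n-1) rfl (by omega) (by omega)]
  split_ifs <;> first | rfl | omega | (exfalso; omega) | (congr 1; omega) | (congr 1; congr 1; omega)

lemma betaD_apply (i k j : ℕ) :
    betaD i k j = (if j = i then (1:ℤ) else 0) - (if j = k+1 then 1 else 0) := by
  simp [betaD, stdE]

lemma gammaD_apply (i k j : ℕ) :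
    gammaD i k j = (if j = i then (1:ℤ) else 0) + (if j = k then 1 else 0) := by
  simp [gammaD, stdE]

lemma alphaD_top (n : ℕ) (j : ℕ) :
    alphaD n n j = (if j = n-1 then (1:ℤ) else 0) + (if j = n then 1 else 0) := by
  simp [alphaD, stdE]

lemma alphaD_swap {n i : ℕ} (h : i ≠ n) : alphaD n i = betaD i i := by
  simp [alphaD, h, betaD]

lemma rootSeq_asc (n : ℕ) : ∀ (d a b : ℕ), b - a = d → a ≤ b → b ≤ n →
    rootSeqD n (ascL a b) = (List.range (b-a)).map (fun t => betaD a (a+t)) := by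
  intro d
  induction d with
  | zero =>
    intro a b hd hab _
    have hab2 : a = b := by omega
    subst hab2
    simp [ascL, rootSeqD]
  | succ d ih =>
    intro a b hd hab hbn
    have hab' : a < b := by omega
    have han : a ≠ n := by omega
    rw [ascL_cons hab', rootSeq_cons, ih (a+1) b (by omega) (by omega) hbn,
      show b - a = (b - (a+1)) + 1 by omega, List.range_succ_eq_map,
      List.map_cons, List.map_map, List.map_map]
    congr 1
    · rw [alphaD_swap han]; rfl
    · apply List.map_congr_left
      intro t ht
      simp only [List.mem_range] at ht
      simp only [Function.comp]
      funext j
      rw [sDap_swap han]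
      simp only [betaD_apply]
      split_ifs <;> omega

lemma rootSeq_desc (n : ℕ) (hn : 1 ≤ n) : ∀ (d a b : ℕ), b - a = d → a ≤ b → b ≤ n →
    rootSeqD n ((ascL a b).reverse) = (List.range (b-a)).map (fun s => betaD (b-1-s) (b-1)) := by
  intro d
  induction d with
  | zero =>
    intro a b hd hab _
    have hab2 : a = b := by omega
    subst hab2
    simp [ascL, rootSeqD]
  | succ d ih =>
    intro a b hd hab hbn
    have hab' : a < b := by omega
    have hbn' : b - 1 ≠ n := by omega
    rw [ascL_snoc hab', List.reverse_append, List.reverse_singleton, List.singleton_append,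
      rootSeq_cons, ih a (b-1) (by omega) (by omega) (by omega),
      show b - a = (b - 1 - a) + 1 by omega, List.range_succ_eq_map,
      List.map_cons, List.map_map, List.map_map]
    congr 1
    · rw [alphaD_swap hbn', Nat.sub_zero]
    · apply List.map_congr_left
      intro s hs
      simp only [List.mem_range] at hs
      simp only [Function.comp]
      funext j
      rw [sDap_swap hbn']
      simp only [betaD_apply]
      split_ifs <;> omega

lemma rootSeq_block (n i : ℕ) (hn : 4 ≤ n) (h1 : 1 ≤ i) (h2 : i ≤ n-2) :
    rootSeqD n (blockD n i) =
      ((List.range (n-i)).map fun t => betaD i (i+t)) ++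
        gammaD i n :: ((List.range (n-1-i)).map fun s => gammaD i (n-1-s)) := by
  rw [blockD_eq, List.singleton_append, rootSeq_append, rootSeq_cons,
    rootSeq_asc n (n-i) i n rfl (by omega) (by omega),
    rootSeq_desc n (by omega) (n-1-i) i (n-1) rfl (by omega) (by omega),
    List.map_cons, List.map_map, List.map_map]
  congr 1
  congr 1
  · funext j
    simp only [act_ascL n (n-i) i n rfl (by omega) (by omega), alphaD_top, gammaD_apply]
    split_ifs <;> omega
  · apply List.map_congr_left
    intro s hs
    simp only [List.mem_range] at hs
    simp only [Function.comp]
    funext j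
    simp only [act_ascL n (n-i) i n rfl (by omega) (by omega), sDap_top,
      betaD_apply, gammaD_apply]
    have e1 : n - 1 - 1 - s = n - 2 - s := by omega
    rw [e1]
    split_ifs <;> omega

def LBlk (n i : ℕ) : List (ℕ → ℤ) :=
  ((List.range (n-i)).map fun t => betaD i (i+t)) ++
    gammaD i n :: ((List.range (n-1-i)).map fun s => gammaD i (n-1-s))

lemma act_blocks (n : ℕ) (hn : 4 ≤ n) : ∀ m, m ≤ n-2 → ∀ v j,
    actD n ((List.range m).flatMap fun i' => blockD n (i'+1)) v j =
      if 1 ≤ j ∧ j ≤ m then -v j else if j = n then (-1)^m * v j else v j := by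
  intro m
  induction m with
  | zero =>
    intro _ v j
    simp only [List.range_zero, List.flatMap_nil, actD_nil, pow_zero, one_mul]
    split_ifs <;> first | rfl | omega
  | succ m ih =>
    intro hm v j
    rw [List.range_succ, List.flatMap_append, actD_append]
    simp only [List.flatMap_cons, List.flatMap_nil, List.append_nil]
    rw [ih (by omega)]
    simp only [act_block n (m+1) hn (by omega) (by omega)]
    split_ifs <;>
      first | rfl | omega | (exfalso; omega) | (rw [pow_succ]; ring) | (congr 1; omega)

lemma LBlk_dec (n i : ℕ) (hn : 4 ≤ n) (h1 : 1 ≤ i) (h2 : i ≤ n-2) :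
    LBlk n i = ((List.range (n-i-1)).map fun t => betaD i (i+t)) ++
      betaD i (n-1) :: gammaD i n :: ((List.range (n-1-i)).map fun s => gammaD i (n-1-s)) := by
  unfold LBlk
  rw [show n - i = (n-i-1)+1 by omega, List.range_succ, List.map_append, List.map_singleton,
    List.append_assoc, List.singleton_append, show i + (n-i-1) = n-1 by omega]
  simp

lemma map_act_perm (n m : ℕ) (hn : 4 ≤ n) (hm : m + 1 ≤ n-2) :
    (List.map (actD n ((List.range m).flatMap fun i' => blockD n (i'+1))) (LBlk n (m+1))).Perm
      (LBlk n (m+1)) := by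
  rcases neg_one_pow_eq_or ℤ m with hp | hp
  · have key : ∀ x ∈ LBlk n (m+1),
        actD n ((List.range m).flatMap fun i' => blockD n (i'+1)) x = id x := by
      intro x hx
      simp only [LBlk, List.mem_append, List.mem_cons, List.mem_map, List.mem_range] at hx
      funext j
      rw [act_blocks n hn m (by omega)]
      simp only [id]
      rcases hx with ⟨t, ht, rfl⟩ | hx2
      · simp only [betaD_apply, hp, one_mul]
        split_ifs <;> first | rfl | omega | (exfalso; omega)
      · rcases hx2 with rfl | ⟨s, hs, rfl⟩ <;>
        · simp only [gammaD_apply, hp, one_mul]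
          split_ifs <;> first | rfl | omega | (exfalso; omega)
    rw [List.map_congr_left key, List.map_id]
  · rw [LBlk_dec n (m+1) hn (by omega) hm, List.map_append, List.map_cons, List.map_cons]
    have hA : List.map (actD n ((List.range m).flatMap fun i' => blockD n (i'+1)))
        ((List.range (n-(m+1)-1)).map fun t => betaD (m+1) ((m+1)+t))
        = (List.range (n-(m+1)-1)).map fun t => betaD (m+1) ((m+1)+t) := by
      rw [List.map_map]
      apply List.map_congr_left
      intro t ht
      simp only [List.mem_range] at ht
      simp only [Function.comp]
      funext j
      rw [act_blocks n hn m (by omega)]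
      simp only [betaD_apply, hp]
      split_ifs <;> first | rfl | omega | (exfalso; omega) | ring_nf | (exfalso; omega)
    have hx : actD n ((List.range m).flatMap fun i' => blockD n (i'+1)) (betaD (m+1) (n-1))
        = gammaD (m+1) n := by
      funext j
      rw [act_blocks n hn m (by omega)]
      simp only [betaD_apply, gammaD_apply, hp]
      split_ifs <;> first | rfl | omega | (exfalso; omega) | ring_nf
    have hy : actD n ((List.range m).flatMap fun i' => blockD n (i'+1)) (gammaD (m+1) n)
        = betaD (m+1) (n-1) := by
      funext j
      rw [act_blocks n hn m (by omega)]
      simp only [betaD_apply, gammaD_apply, hp]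
      split_ifs <;> first | rfl | omega | (exfalso; omega) | ring_nf
    have hC : List.map (actD n ((List.range m).flatMap fun i' => blockD n (i'+1)))
        ((List.range (n-1-(m+1))).map fun s => gammaD (m+1) (n-1-s))
        = (List.range (n-1-(m+1))).map fun s => gammaD (m+1) (n-1-s) := by
      rw [List.map_map]
      apply List.map_congr_left
      intro s hs
      simp only [List.mem_range] at hs
      simp only [Function.comp]
      funext j
      rw [act_blocks n hn m (by omega)]
      simp only [gammaD_apply, hp]
      split_ifs <;> first | rfl | omega | (exfalso; omega) | ring_nf
    rw [hA, hx, hy, hC]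
    exact List.Perm.append_left _ (List.Perm.swap _ _ _)

def fullL (n : ℕ) : List (ℕ → ℤ) :=
  ((List.range (n-2)).flatMap fun i' => LBlk n (i'+1)) ++ [betaD (n-1) (n-1), gammaD (n-1) n]

lemma rootSeq_blocks_perm (n : ℕ) (hn : 4 ≤ n) : ∀ m, m ≤ n-2 →
    (rootSeqD n ((List.range m).flatMap fun i' => blockD n (i'+1))).Perm
      ((List.range m).flatMap fun i' => LBlk n (i'+1)) := by
  intro m
  induction m with
  | zero => simp [rootSeqD]
  | succ m ih =>
    intro hm
    rw [List.range_succ, List.flatMap_append, List.flatMap_append, rootSeq_append]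
    simp only [List.flatMap_cons, List.flatMap_nil, List.append_nil]
    have hb : rootSeqD n (blockD n (m+1)) = LBlk n (m+1) :=
      rootSeq_block n (m+1) hn (by omega) (by omega)
    rw [hb]
    exact (ih (by omega)).append (map_act_perm n m hn hm)

lemma rootSeq_last (n : ℕ) (hn : 4 ≤ n) :
    rootSeqD n [n-1, n] = [betaD (n-1) (n-1), gammaD (n-1) n] := by
  have h0 : rootSeqD n ([] : List ℕ) = [] := by simp [rootSeqD]
  rw [show ([n-1, n] : List ℕ) = (n-1) :: n :: [] from rfl, rootSeq_cons, rootSeq_cons, h0]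
  simp only [List.map_nil, List.map_cons]
  congr 1
  · exact alphaD_swap (by omega)
  · congr 1
    funext j
    rw [sDap_swap (show n-1 ≠ n by omega)]
    simp only [alphaD_top, gammaD_apply, show n-1+1 = n by omega]
    split_ifs <;> omega

lemma rootSeq_word_perm (n : ℕ) (hn : 4 ≤ n) : (rootSeqD n (wordD n)).Perm (fullL n) := by
  unfold wordD fullL
  rw [rootSeq_append, rootSeq_last n hn]
  refine (rootSeq_blocks_perm n hn (n-2) le_rfl).append ?_
  rcases neg_one_pow_eq_or ℤ (n-2) with hp | hp
  · have hx : actD n ((List.range (n-2)).flatMap fun i' => blockD n (i'+1)) (betaD (n-1) (n-1))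
        = betaD (n-1) (n-1) := by
      funext j
      rw [act_blocks n hn (n-2) le_rfl]
      simp only [betaD_apply, hp, one_mul]
      split_ifs <;> first | rfl | omega | (exfalso; omega)
    have hy : actD n ((List.range (n-2)).flatMap fun i' => blockD n (i'+1)) (gammaD (n-1) n)
        = gammaD (n-1) n := by
      funext j
      rw [act_blocks n hn (n-2) le_rfl]
      simp only [gammaD_apply, hp, one_mul]
      split_ifs <;> first | rfl | omega | (exfalso; omega)
    rw [List.map_cons, List.map_cons, List.map_nil, hx, hy]
  · have hx : actD n ((List.range (n-2)).flatMap fun i' => blockD n (i'+1)) (betaD (n-1) (n-1))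
        = gammaD (n-1) n := by
      funext j
      rw [act_blocks n hn (n-2) le_rfl]
      simp only [betaD_apply, gammaD_apply, hp]
      split_ifs <;> first | rfl | omega | (exfalso; omega) | ring_nf
    have hy : actD n ((List.range (n-2)).flatMap fun i' => blockD n (i'+1)) (gammaD (n-1) n)
        = betaD (n-1) (n-1) := by
      funext j
      rw [act_blocks n hn (n-2) le_rfl]
      simp only [betaD_apply, gammaD_apply, hp]
      split_ifs <;> first | rfl | omega | (exfalso; omega) | ring_nf
    rw [List.map_cons, List.map_cons, List.map_nil, hx, hy]
    exact List.Perm.swap _ _ _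

lemma betaD_inj {i k i' k' : ℕ} (h2 : i ≤ k) (h2' : i' ≤ k')
    (h : betaD i k = betaD i' k') : i = i' ∧ k = k' := by
  have hi := congrFun h i
  have hk := congrFun h (k+1)
  simp only [betaD_apply] at hi hk
  split_ifs at hi hk <;> omega

lemma betaD_ne_gammaD {i k i' k' : ℕ} (h2 : i ≤ k) : betaD i k ≠ gammaD i' k' := by
  intro h
  have := congrFun h (k+1)
  simp only [betaD_apply, gammaD_apply] at this
  split_ifs at this <;> omega

lemma gammaD_inj {i k i' k' : ℕ} (h : i < k) (h' : i' < k')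
    (he : gammaD i k = gammaD i' k') : i = i' ∧ k = k' := by
  have key : ∀ j, (if j = i then (1:ℤ) else 0) + (if j = k then 1 else 0)
      = (if j = i' then 1 else 0) + (if j = k' then 1 else 0) := by
    intro j
    have := congrFun he j
    simpa [gammaD_apply] using this
  have a1 := key i
  have a2 := key k
  have a3 := key i'
  have a4 := key k'
  rw [if_pos rfl, if_neg (show i ≠ k by omega)] at a1
  rw [if_neg (show k ≠ i by omega), if_pos rfl] at a2
  rw [if_pos rfl, if_neg (show i' ≠ k' by omega)] at a3
  rw [if_neg (show k' ≠ i' by omega), if_pos rfl] at a4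
  have hi : i = i' ∨ i = k' := by split_ifs at a1 <;> omega
  have hk : k = i' ∨ k = k' := by split_ifs at a2 <;> omega
  have hi' : i' = i ∨ i' = k := by split_ifs at a3 <;> omega
  have hk' : k' = i ∨ k' = k := by split_ifs at a4 <;> omega
  omega

lemma mem_LBlk_iff {n i : ℕ} (hn : 4 ≤ n) (h1 : 1 ≤ i) (h2 : i ≤ n-2) (β : ℕ → ℤ) :
    β ∈ LBlk n i ↔ (∃ k, i ≤ k ∧ k ≤ n-1 ∧ β = betaD i k) ∨
      (∃ k, i < k ∧ k ≤ n ∧ β = gammaD i k) := by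
  unfold LBlk
  simp only [List.mem_append, List.mem_cons, List.mem_map, List.mem_range]
  constructor
  · rintro (⟨t, ht, rfl⟩ | rfl | ⟨s, hs, rfl⟩)
    · exact Or.inl ⟨i+t, by omega, by omega, rfl⟩
    · exact Or.inr ⟨n, by omega, le_rfl, rfl⟩
    · exact Or.inr ⟨n-1-s, by omega, by omega, rfl⟩
  · rintro (⟨k, hk1, hk2, rfl⟩ | ⟨k, hk1, hk2, rfl⟩)
    · exact Or.inl ⟨k-i, by omega, by rw [show i+(k-i) = k by omega]⟩
    · rcases eq_or_ne k n with rfl | hne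
      · exact Or.inr (Or.inl rfl)
      · exact Or.inr (Or.inr ⟨n-1-k, by omega, by rw [show n-1-(n-1-k) = k by omega]⟩)

lemma LBlk_support {n i : ℕ} (hn : 4 ≤ n) (h1 : 1 ≤ i) (h2 : i ≤ n-2) {β : ℕ → ℤ}
    (hb : β ∈ LBlk n i) : β i = 1 ∧ ∀ j, j < i → β j = 0 := by
  rcases (mem_LBlk_iff hn h1 h2 β).mp hb with ⟨k, hk1, hk2, rfl⟩ | ⟨k, hk1, hk2, rfl⟩
  · constructor
    · simp only [betaD_apply]; split_ifs <;> omega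
    · intro j hj; simp only [betaD_apply]; split_ifs <;> omega
  · constructor
    · simp only [gammaD_apply]; split_ifs <;> omega
    · intro j hj; simp only [gammaD_apply]; split_ifs <;> omega

lemma LBlk_nodup {n i : ℕ} (hn : 4 ≤ n) (h1 : 1 ≤ i) (h2 : i ≤ n-2) : (LBlk n i).Nodup := by
  unfold LBlk
  rw [List.nodup_append]
  refine ⟨?_, ?_, ?_⟩
  · refine List.Nodup.map_on ?_ (List.nodup_range)
    intro x hx y hy h
    simp only [List.mem_range] at hx hy
    have := betaD_inj (by omega) (by omega) h
    omega
  · rw [List.nodup_cons]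
    constructor
    · intro hmem
      rcases List.mem_map.mp hmem with ⟨s, hs, h⟩
      simp only [List.mem_range] at hs
      have := gammaD_inj (by omega) (by omega) h.symm
      omega
    · refine List.Nodup.map_on ?_ (List.nodup_range)
      intro x hx y hy h
      simp only [List.mem_range] at hx hy
      have := gammaD_inj (by omega) (by omega) h
      omega
  · intro a ha b hb hab; subst hab
    rcases List.mem_map.mp ha with ⟨t, ht, rfl⟩
    simp only [List.mem_range] at ht
    rcases List.mem_cons.mp hb with h | hb2
    · exact betaD_ne_gammaD (by omega) h
    · rcases List.mem_map.mp hb2 with ⟨s, hs, h⟩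
      exact betaD_ne_gammaD (by omega) h.symm

lemma blocks_nodup (n : ℕ) (hn : 4 ≤ n) : ∀ m, m ≤ n-2 →
    ((List.range m).flatMap fun i' => LBlk n (i'+1)).Nodup ∧
    (∀ β ∈ (List.range m).flatMap fun i' => LBlk n (i'+1),
      ∃ i, 1 ≤ i ∧ i ≤ m ∧ β i = 1 ∧ ∀ j, j < i → β j = 0) := by
  intro m
  induction m with
  | zero => simp
  | succ m ih =>
    intro hm
    obtain ⟨ihn, ihs⟩ := ih (by omega)
    rw [List.range_succ, List.flatMap_append]
    simp only [List.flatMap_cons, List.flatMap_nil, List.append_nil]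
    constructor
    · rw [List.nodup_append]
      refine ⟨ihn, LBlk_nodup hn (by omega) (by omega), ?_⟩
      intro a ha b hb hab; subst hab
      obtain ⟨i, hi1, hi2, hi3, _⟩ := ihs a ha
      have := (LBlk_support hn (by omega) (by omega) hb).2 i (by omega)
      omega
    · intro β hβ
      rcases List.mem_append.mp hβ with h | h
      · obtain ⟨i, hi1, hi2, hi3, hi4⟩ := ihs β h
        exact ⟨i, hi1, by omega, hi3, hi4⟩
      · obtain ⟨hs1, hs2⟩ := LBlk_support hn (by omega) (by omega) h
        exact ⟨m+1, by omega, le_rfl, hs1, hs2⟩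

lemma fullL_nodup (n : ℕ) (hn : 4 ≤ n) : (fullL n).Nodup := by
  unfold fullL
  rw [List.nodup_append]
  obtain ⟨hbn, hbs⟩ := blocks_nodup n hn (n-2) le_rfl
  refine ⟨hbn, ?_, ?_⟩
  · rw [List.nodup_cons]
    refine ⟨?_, List.nodup_singleton _⟩
    intro hmem
    exact betaD_ne_gammaD (le_refl (n-1)) (List.mem_singleton.mp hmem)
  · intro a ha b hb hab; subst hab
    obtain ⟨i, hi1, hi2, hi3, _⟩ := hbs a ha
    rcases List.mem_cons.mp hb with rfl | hb2
    · have : betaD (n-1) (n-1) i = 0 := by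
        simp only [betaD_apply]; split_ifs <;> omega
      omega
    · rcases List.mem_cons.mp hb2 with rfl | hb3
      · have : gammaD (n-1) n i = 0 := by
          simp only [gammaD_apply]; split_ifs <;> omega
        omega
      · exact absurd hb3 List.not_mem_nil

lemma mem_fullL {n : ℕ} (hn : 4 ≤ n) (β : ℕ → ℤ) : β ∈ fullL n ↔ PosRootD n β := by
  unfold fullL PosRootD
  simp only [List.mem_append, List.mem_flatMap, List.mem_range, List.mem_cons,
    List.not_mem_nil, or_false]
  constructor
  · rintro (⟨i', hi', hb⟩ | rfl | rfl)
    · rcases (mem_LBlk_iff hn (by omega) (by omega) β).mp hb with ⟨k, h1, h2, rfl⟩ | ⟨k, h1, h2, rfl⟩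
      · exact Or.inl ⟨i'+1, k, by omega, h1, h2, rfl⟩
      · exact Or.inr ⟨i'+1, k, by omega, h1, h2, rfl⟩
    · exact Or.inl ⟨n-1, n-1, by omega, le_rfl, le_rfl, rfl⟩
    · exact Or.inr ⟨n-1, n, by omega, by omega, le_rfl, rfl⟩
  · rintro (⟨i, k, hi, h1, h2, rfl⟩ | ⟨i, k, hi, h1, h2, rfl⟩)
    · by_cases hc : i ≤ n-2
      · refine Or.inl ⟨i-1, by omega, ?_⟩
        refine (mem_LBlk_iff hn (by omega) (by omega) _).mpr (Or.inl ⟨k, by omega, h2, ?_⟩)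
        rw [show i-1+1 = i by omega]
      · refine Or.inr (Or.inl ?_)
        rw [show i = n-1 by omega, show k = n-1 by omega]
    · by_cases hc : i ≤ n-2
      · refine Or.inl ⟨i-1, by omega, ?_⟩
        refine (mem_LBlk_iff hn (by omega) (by omega) _).mpr (Or.inr ⟨k, by omega, h2, ?_⟩)
        rw [show i-1+1 = i by omega]
      · refine Or.inr (Or.inr ?_)
        rw [show i = n-1 by omega, show k = n by omega]

lemma blocks_len (n : ℕ) (hn : 4 ≤ n) : ∀ m, m ≤ n-2 →
    ((List.range m).flatMap fun i' => blockD n (i'+1)).length + m*m + m = 2*n*m := by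
  intro m
  induction m with
  | zero => simp
  | succ m ih =>
    intro hm
    rw [List.range_succ, List.flatMap_append, List.length_append]
    simp only [List.flatMap_cons, List.flatMap_nil, List.append_nil]
    have hbl : (blockD n (m+1)).length = (n-(m+1)) + 1 + (n-1-(m+1)) := by
      simp [blockD]
      omega
    rw [hbl]
    have ih' := ih (by omega)
    have e1 : (m+1)*(m+1) = m*m + 2*m + 1 := by ring
    have e2 : 2*n*(m+1) = 2*n*m + 2*n := by ring
    have hx : n-(m+1) + (m+1) = n := by omega
    have hy : n-1-(m+1) + (m+2) = n := by omega
    rw [e1, e2]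
    linarith [ih', hx, hy]

lemma act_word (n : ℕ) (hn : 4 ≤ n) (v : ℕ → ℤ) (j : ℕ) :
    actD n (wordD n) v j =
      if 1 ≤ j ∧ j ≤ n-1 then -v j else if j = n then (-1)^(n-1) * v j else v j := by
  unfold wordD
  rw [actD_append]
  have hlast : ∀ (u : ℕ → ℤ) jj, actD n [n-1, n] u jj =
      if jj = n-1 ∨ jj = n then -u jj else u jj := by
    intro u jj
    show sDap n (n-1) (sDap n n u) jj = _
    rw [sDap_swap (show n-1 ≠ n by omega)]
    simp only [sDap_top, show n-1+1 = n by omega]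
    split_ifs <;>
      first
        | rfl
        | omega
        | (exfalso; omega)
        | (congr 1; omega)
        | (congr 1; congr 1; omega)
  rw [act_blocks n hn (n-2) le_rfl]
  simp only [hlast]
  split_ifs <;>
    first
      | rfl
      | omega
      | (exfalso; omega)
      | (congr 1; omega)
      | (congr 1; congr 1; omega)
      | (rw [show n-1 = (n-2)+1 by omega, pow_succ]; ring)
      | ring_nf

/-- The word `𝐢^D` has length `N = n(n-1)`; its induced root sequence
consists of pairwise distinct positive roots of type `D_n` (hence lists all of them); and
the product `s_(i₁)⋯s_(i_N)` maps every positive root to the negative of a positive root.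
In particular `𝐢^D` is a reduced word for the longest element of `W(D_n)`. -/
theorem statement13 (n : ℕ) (hn : 4 ≤ n) :
    (wordD n).length = n * (n-1) ∧
    (rootSeqD n (wordD n)).Nodup ∧
    (∀ β, β ∈ rootSeqD n (wordD n) ↔ PosRootD n β) ∧
    (∀ β, PosRootD n β → ∃ γ, PosRootD n γ ∧ actD n (wordD n) β = -γ) := by
  refine ⟨?_, ?_, ?_, ?_⟩
  · -- length
    obtain ⟨b, rfl⟩ : ∃ b, n = b + 2 := ⟨n - 2, by omega⟩
    have h := blocks_len (b+2) hn (b+2-2) le_rfl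
    have hw : (wordD (b+2)).length =
        ((List.range (b+2-2)).flatMap fun i' => blockD (b+2) (i'+1)).length + 2 := by
      simp [wordD]
    rw [hw]
    simp only [show b+2-2 = b from by omega, show b+2-1 = b+1 from by omega] at h ⊢
    have e1 : 2*(b+2)*b = 2*(b*b) + 4*b := by ring
    have e2 : (b+2)*(b+1) = b*b + 3*b + 2 := by ring
    linarith [h, e1, e2]
  · exact (List.Perm.nodup_iff (rootSeq_word_perm n hn)).mpr (fullL_nodup n hn)
  · intro β
    exact (rootSeq_word_perm n hn).mem_iff.trans (mem_fullL hn β)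
  · intro β hβ
    rcases hβ with ⟨i, k, hi, h1, h2, rfl⟩ | ⟨i, k, hi, h1, h2, rfl⟩
    · by_cases hk : k ≤ n-2
      · refine ⟨betaD i k, Or.inl ⟨i, k, hi, h1, h2, rfl⟩, ?_⟩
        funext j
        rw [act_word n hn]
        simp only [betaD_apply, Pi.neg_apply]
        split_ifs <;> first | ring1 | omega | (exfalso; omega)
      · rcases Nat.even_or_odd n with he | ho
        · have hp : (-1:ℤ)^(n-1) = -1 := Odd.neg_one_pow (by
            rcases he with ⟨c, hc⟩; exact ⟨c-1, by omega⟩)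
          refine ⟨betaD i k, Or.inl ⟨i, k, hi, h1, h2, rfl⟩, ?_⟩
          funext j
          rw [act_word n hn]
          simp only [betaD_apply, Pi.neg_apply, hp]
          split_ifs <;> first | ring1 | omega | (exfalso; omega)
        · have hp : (-1:ℤ)^(n-1) = 1 := Even.neg_one_pow (by
            rcases ho with ⟨c, hc⟩; exact ⟨c, by omega⟩)
          refine ⟨gammaD i n, Or.inr ⟨i, n, hi, by omega, le_rfl, rfl⟩, ?_⟩
          funext j
          rw [act_word n hn]
          simp only [betaD_apply, gammaD_apply, Pi.neg_apply, hp, one_mul]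
          split_ifs <;> first | ring1 | omega | (exfalso; omega)
    · by_cases hk : k ≤ n-1
      · refine ⟨gammaD i k, Or.inr ⟨i, k, hi, h1, h2, rfl⟩, ?_⟩
        funext j
        rw [act_word n hn]
        simp only [gammaD_apply, Pi.neg_apply]
        split_ifs <;> first | ring1 | omega | (exfalso; omega)
      · rcases Nat.even_or_odd n with he | ho
        · have hp : (-1:ℤ)^(n-1) = -1 := Odd.neg_one_pow (by
            rcases he with ⟨c, hc⟩; exact ⟨c-1, by omega⟩)
          refine ⟨gammaD i k, Or.inr ⟨i, k, hi, h1, h2, rfl⟩, ?_⟩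
          funext j
          rw [act_word n hn]
          simp only [gammaD_apply, Pi.neg_apply, hp]
          split_ifs <;> first | ring1 | omega | (exfalso; omega)
        · have hp : (-1:ℤ)^(n-1) = 1 := Even.neg_one_pow (by
            rcases ho with ⟨c, hc⟩; exact ⟨c, by omega⟩)
          refine ⟨betaD i (n-1), Or.inl ⟨i, n-1, hi, by omega, le_rfl, rfl⟩, ?_⟩
          funext j
          rw [act_word n hn]
          simp only [betaD_apply, gammaD_apply, Pi.neg_apply, hp, one_mul]
          split_ifs <;> first | ring1 | omega | (exfalso; omega)

end
end
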